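/- Let Ā, P, Ē ∈ ℝ^{q×q} with P symmetric positive definite and Ē invertible, C̄ ∈ ℝ^{p×q}, N₁ ∈ ℝ^{q×p}, N₂ ∈ ℝ^{q×q}, B̄_f ∈ ℝ^{q×m}, C_ω ∈ ℝ^{p×p}, H₁ ∈ ℝ^{m×p}, H₂ ∈ ℝ^{p×p}, H₃ ∈ ℝ^{p×q}. Set L = Ē P⁻¹ N₁ and 𝓛 = Ē P⁻¹ N₂, and assume: (i) the symmetric block matrix Ξ = [[Ξ₁₁, Ξ₁₂],[Ξ₁₂ᵀ, Ξ₂₂]] is negative definite, where Ξ₁₁ = P Ē⁻¹ Ā + (P Ē⁻¹ Ā)ᵀ − N₁ C̄ − C̄ᵀ N₁ᵀ, Ξ₁₂ = (N₁ C̄)ᵀ, Ξ₂₂ = P Ē⁻¹ Ā + (P Ē⁻¹ Ā)ᵀ − N₂ − N₂ᵀ; (ii) (H₁ C̄)ᵀ = P Ē⁻¹ B̄_f, (H₂ C̄)ᵀ = P Ē⁻¹ L C_ω, and H₃ᵀ = P Ē⁻¹ L C_ω. Let ρ = c + η with c ≥ 0, η ≥ 0, and ω̄ ≥ 0. Let ē,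 ε̄ : ℝ → ℝ^q be differentiable, and let d̄ : ℝ → ℝ^m, ω : ℝ → ℝ^p satisfy |d̄(t)_i| ≤ c and |ω(t)_j| ≤ ω̄ for all t, i, j. Suppose for all t: Ē ē′(t) = (Ā − L C̄) ē(t) + L C_ω(−ω̄·sgn(H₂ C̄ ē(t)) − ω(t)) + B̄_f(d̄(t) − ρ·sgn(H₁ C̄ ē(t))), and Ē ε̄′(t) = (Ā − 𝓛) ε̄(t) + L C̄ ē(t) + L C_ω(ω(t) − ω̄·sgn(H₃ ε̄(t))). Then V(t) = ē(t)ᵀ P ē(t) + ε̄(t)ᵀ P ε̄(t) is differentiable with V′(t) ≤ 0 for every t, and V′(t) < 0 whenever (ē(t), ε̄(t)) ≠ (0, 0). -/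

import Mathlib

open Matrix

/-- Componentwise sign vector: `(sgn s) i = 1` if `s i > 0`, `-1` if `s i < 0`, `0` otherwise. -/
noncomputable def sgn {k : Type*} (s : k → ℝ) : k → ℝ := fun i => Real.sign (s i)

lemma my_self_mul_sign (y : ℝ) : y * Real.sign y = |y| := by
  rcases lt_trichotomy y 0 with h | h | h
  · rw [Real.sign_of_neg h, abs_of_neg h]; ring
  · simp [h]
  · rw [Real.sign_of_pos h, abs_of_pos h]; ring

lemma slack_le {k : ℕ} (y w : Fin k → ℝ) (b c : ℝ) (hcb : c ≤ b)
    (hw : ∀ i, |w i| ≤ c) : y ⬝ᵥ (w - b • sgn y) ≤ 0 := by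
  unfold dotProduct
  apply Finset.sum_nonpos
  intro i _
  have h1 : y i * (w i - b * Real.sign (y i)) = y i * w i - b * (y i * Real.sign (y i)) := by ring
  have h2 : y i * w i ≤ |y i| * c :=
    (le_abs_self _).trans (by rw [abs_mul]; exact mul_le_mul_of_nonneg_left (hw i) (abs_nonneg _))
  have h3 : (0:ℝ) ≤ |y i| := abs_nonneg _
  simp only [Pi.sub_apply, Pi.smul_apply, smul_eq_mul, sgn, h1, my_self_mul_sign]
  nlinarith

lemma dotT {a b : ℕ} (A : Matrix (Fin a) (Fin b) ℝ) (x : Fin b → ℝ) (v : Fin a → ℝ) :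
    x ⬝ᵥ (Aᵀ *ᵥ v) = (A *ᵥ x) ⬝ᵥ v := by
  rw [Matrix.dotProduct_mulVec, Matrix.vecMul_transpose]

lemma symDot {a : ℕ} (A : Matrix (Fin a) (Fin a) ℝ) (x y : Fin a → ℝ) :
    x ⬝ᵥ (Aᵀ *ᵥ y) = y ⬝ᵥ (A *ᵥ x) := by
  rw [dotT, dotProduct_comm]

lemma hasDerivAt_quadForm {q : ℕ} (P : Matrix (Fin q) (Fin q) ℝ) {f : ℝ → Fin q → ℝ}
    {f' : Fin q → ℝ} {t : ℝ} (hf : HasDerivAt f f' t) :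
    HasDerivAt (fun s => f s ⬝ᵥ P.mulVec (f s))
      (f' ⬝ᵥ P.mulVec (f t) + f t ⬝ᵥ P.mulVec f') t := by
  have hcoord : ∀ i, HasDerivAt (fun s => f s i) (f' i) t := fun i => hasDerivAt_pi.1 hf i
  have hrow : ∀ i, HasDerivAt (fun s => P.mulVec (f s) i) (P.mulVec f' i) t := by
    intro i
    simpa [Matrix.mulVec, dotProduct] using
      HasDerivAt.fun_sum (fun j _ => (hcoord j).const_mul (P i j))
  have : HasDerivAt (fun s => ∑ i, f s i * P.mulVec (f s) i)
      (∑ i, (f' i * P.mulVec (f t) i + f t i * P.mulVec f' i)) t :=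
    HasDerivAt.fun_sum (fun i _ => (hcoord i).mul (hrow i))
  simpa [dotProduct, Finset.sum_add_distrib] using this

theorem stmt8 {q m p : ℕ}
    (A P E : Matrix (Fin q) (Fin q) ℝ)
    (hPsymm : Pᵀ = P) (hPpos : ∀ x : Fin q → ℝ, x ≠ 0 → 0 < x ⬝ᵥ P.mulVec x)
    (hE : IsUnit E.det)
    (C : Matrix (Fin p) (Fin q) ℝ)
    (N₁ : Matrix (Fin q) (Fin p) ℝ) (N₂ : Matrix (Fin q) (Fin q) ℝ)
    (Bf : Matrix (Fin q) (Fin m) ℝ) (Cω : Matrix (Fin p) (Fin p) ℝ)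
    (H₁ : Matrix (Fin m) (Fin p) ℝ) (H₂ : Matrix (Fin p) (Fin p) ℝ)
    (H₃ : Matrix (Fin p) (Fin q) ℝ)
    (L : Matrix (Fin q) (Fin p) ℝ) (hL : L = E * P⁻¹ * N₁)
    (Lc : Matrix (Fin q) (Fin q) ℝ) (hLc : Lc = E * P⁻¹ * N₂)
    (Ξ : Matrix ((Fin q) ⊕ (Fin q)) ((Fin q) ⊕ (Fin q)) ℝ)
    (hΞ : Ξ = fromBlocks
      (P * E⁻¹ * A + (P * E⁻¹ * A)ᵀ - N₁ * C - Cᵀ * N₁ᵀ)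
      ((N₁ * C)ᵀ)
      ((N₁ * C)ᵀ)ᵀ
      (P * E⁻¹ * A + (P * E⁻¹ * A)ᵀ - N₂ - N₂ᵀ))
    (hNegDef : ∀ ξ : Fin q ⊕ Fin q → ℝ, ξ ≠ 0 → ξ ⬝ᵥ Ξ.mulVec ξ < 0)
    (hH₁ : (H₁ * C)ᵀ = P * E⁻¹ * Bf)
    (hH₂ : (H₂ * C)ᵀ = P * E⁻¹ * L * Cω)
    (hH₃ : H₃ᵀ = P * E⁻¹ * L * Cω)
    (c η ρ ωb : ℝ) (hc : 0 ≤ c) (hη : 0 ≤ η) (hρ : ρ = c + η) (hωb : 0 ≤ ωb)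
    (e ε : ℝ → Fin q → ℝ) (he : Differentiable ℝ e) (hε : Differentiable ℝ ε)
    (d : ℝ → Fin m → ℝ) (ω : ℝ → Fin p → ℝ)
    (hd : ∀ t i, |d t i| ≤ c) (hω : ∀ t j, |ω t j| ≤ ωb)
    (hedyn : ∀ t, E.mulVec (deriv e t) =
      (A - L * C).mulVec (e t)
        + (L * Cω).mulVec (-(ωb • sgn ((H₂ * C).mulVec (e t))) - ω t)
        + Bf.mulVec (d t - ρ • sgn ((H₁ * C).mulVec (e t))))
    (hεdyn : ∀ t, E.mulVec (deriv ε t) =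
      (A - Lc).mulVec (ε t) + (L * C).mulVec (e t)
        + (L * Cω).mulVec (ω t - ωb • sgn (H₃.mulVec (ε t)))) :
    Differentiable ℝ (fun t => e t ⬝ᵥ P.mulVec (e t) + ε t ⬝ᵥ P.mulVec (ε t)) ∧
      (∀ t, deriv (fun t => e t ⬝ᵥ P.mulVec (e t) + ε t ⬝ᵥ P.mulVec (ε t)) t ≤ 0) ∧
      (∀ t, (e t, ε t) ≠ (0, 0) →
        deriv (fun t => e t ⬝ᵥ P.mulVec (e t) + ε t ⬝ᵥ P.mulVec (ε t)) t < 0) := by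
  -- P is invertible
  have hPposdef : P.PosDef := by
    rw [Matrix.posDef_iff_dotProduct_mulVec]
    constructor
    · have : Pᴴ = Pᵀ := by ext i j; simp [Matrix.conjTranspose_apply]
      rw [Matrix.IsHermitian, this, hPsymm]
    · intro x hx
      simpa using hPpos x hx
  have hP : IsUnit P.det := hPposdef.det_pos.ne'.isUnit
  set M := P * E⁻¹ with hM
  have hME : M * E = P := by
    rw [hM, Matrix.mul_assoc, Matrix.nonsing_inv_mul E hE, Matrix.mul_one]
  have hML : M * L = N₁ := by
    rw [hM, hL]
    calc P * E⁻¹ * (E * P⁻¹ * N₁) = P * (E⁻¹ * E) * (P⁻¹ * N₁) := by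
          simp only [Matrix.mul_assoc]
      _ = P * P⁻¹ * N₁ := by rw [Matrix.nonsing_inv_mul E hE, Matrix.mul_one, ← Matrix.mul_assoc]
      _ = N₁ := by rw [Matrix.mul_nonsing_inv P hP, Matrix.one_mul]
  have hMLc : M * Lc = N₂ := by
    rw [hM, hLc]
    calc P * E⁻¹ * (E * P⁻¹ * N₂) = P * (E⁻¹ * E) * (P⁻¹ * N₂) := by
          simp only [Matrix.mul_assoc]
      _ = P * P⁻¹ * N₂ := by rw [Matrix.nonsing_inv_mul E hE, Matrix.mul_one, ← Matrix.mul_assoc]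
      _ = N₂ := by rw [Matrix.mul_nonsing_inv P hP, Matrix.one_mul]
  -- key identities for the two derivatives
  have he1 : ∀ t, e t ⬝ᵥ P *ᵥ deriv e t =
      (e t ⬝ᵥ (M * A) *ᵥ e t - e t ⬝ᵥ (N₁ * C) *ᵥ e t)
      + ((H₂ * C) *ᵥ e t) ⬝ᵥ (-(ωb • sgn ((H₂ * C) *ᵥ e t)) - ω t)
      + ((H₁ * C) *ᵥ e t) ⬝ᵥ (d t - ρ • sgn ((H₁ * C) *ᵥ e t)) := by
    intro t
    have h1 : P *ᵥ deriv e t = M *ᵥ (E *ᵥ deriv e t) := by rw [mulVec_mulVec, hME]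
    have hA : M *ᵥ ((A - L * C) *ᵥ e t) = (M * A) *ᵥ e t - (N₁ * C) *ᵥ e t := by
      rw [mulVec_mulVec, Matrix.mul_sub, ← Matrix.mul_assoc M L C, hML, Matrix.sub_mulVec]
    have hB : ∀ v, M *ᵥ ((L * Cω) *ᵥ v) = (H₂ * C)ᵀ *ᵥ v := by
      intro v
      rw [mulVec_mulVec, ← Matrix.mul_assoc M L Cω, hH₂]
    have hC : ∀ w, M *ᵥ (Bf *ᵥ w) = (H₁ * C)ᵀ *ᵥ w := by
      intro w; rw [mulVec_mulVec, ← hH₁]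
    rw [h1, hedyn t, Matrix.mulVec_add, Matrix.mulVec_add, hA, hB, hC,
      dotProduct_add, dotProduct_add, dotProduct_sub, dotT, dotT]
  have he2 : ∀ t, ε t ⬝ᵥ P *ᵥ deriv ε t =
      (ε t ⬝ᵥ (M * A) *ᵥ ε t - ε t ⬝ᵥ N₂ *ᵥ ε t + ε t ⬝ᵥ (N₁ * C) *ᵥ e t)
      + (H₃ *ᵥ ε t) ⬝ᵥ (ω t - ωb • sgn (H₃ *ᵥ ε t)) := by
    intro t
    have h1 : P *ᵥ deriv ε t = M *ᵥ (E *ᵥ deriv ε t) := by rw [mulVec_mulVec, hME]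
    have hA : M *ᵥ ((A - Lc) *ᵥ ε t) = (M * A) *ᵥ ε t - N₂ *ᵥ ε t := by
      rw [mulVec_mulVec, Matrix.mul_sub, hMLc, Matrix.sub_mulVec]
    have hB : M *ᵥ ((L * C) *ᵥ e t) = (N₁ * C) *ᵥ e t := by
      rw [mulVec_mulVec, ← Matrix.mul_assoc M L C, hML]
    have hC : ∀ v, M *ᵥ ((L * Cω) *ᵥ v) = H₃ᵀ *ᵥ v := by
      intro v
      rw [mulVec_mulVec, ← Matrix.mul_assoc M L Cω, hH₃]
    rw [h1, hεdyn t, Matrix.mulVec_add, Matrix.mulVec_add, hA, hB, hC,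
      dotProduct_add, dotProduct_add, dotProduct_sub, dotT]
  -- the quadratic form
  have hquad : ∀ t, (Sum.elim (e t) (ε t)) ⬝ᵥ Ξ *ᵥ (Sum.elim (e t) (ε t)) =
      2 * (e t ⬝ᵥ (M * A) *ᵥ e t - e t ⬝ᵥ (N₁ * C) *ᵥ e t)
      + 2 * (ε t ⬝ᵥ (M * A) *ᵥ ε t - ε t ⬝ᵥ N₂ *ᵥ ε t + ε t ⬝ᵥ (N₁ * C) *ᵥ e t) := by
    intro t
    rw [hΞ, fromBlocks_mulVec, sumElim_dotProduct_sumElim]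
    simp only [Matrix.sub_mulVec, Matrix.add_mulVec, dotProduct_sub, dotProduct_add,
      Matrix.transpose_transpose, ← Matrix.transpose_mul, Sum.elim_comp_inl, Sum.elim_comp_inr]
    rw [symDot (M * A) (e t) (e t), symDot (N₁ * C) (e t) (e t),
      symDot (N₁ * C) (e t) (ε t), symDot (M * A) (ε t) (ε t), symDot N₂ (ε t) (ε t)]
    ring
  -- derivative of V
  have hV : ∀ t, HasDerivAt (fun t => e t ⬝ᵥ P.mulVec (e t) + ε t ⬝ᵥ P.mulVec (ε t))
      (2 * (e t ⬝ᵥ P *ᵥ deriv e t) + 2 * (ε t ⬝ᵥ P *ᵥ deriv ε t)) t := by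
    intro t
    have hsym : ∀ x y : Fin q → ℝ, x ⬝ᵥ P *ᵥ y = y ⬝ᵥ P *ᵥ x := by
      intro x y
      conv_lhs => rw [← hPsymm]
      rw [symDot]
    have h := (hasDerivAt_quadForm P (he t).hasDerivAt).add
      (hasDerivAt_quadForm P (hε t).hasDerivAt)
    refine h.congr_deriv ?_
    rw [hsym (e t) (deriv e t), hsym (ε t) (deriv ε t)]
    ring
  have hDiff : Differentiable ℝ (fun t => e t ⬝ᵥ P.mulVec (e t) + ε t ⬝ᵥ P.mulVec (ε t)) :=
    fun t => (hV t).differentiableAt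
  -- bound on the derivative
  have hbound : ∀ t, deriv (fun t => e t ⬝ᵥ P.mulVec (e t) + ε t ⬝ᵥ P.mulVec (ε t)) t ≤
      (Sum.elim (e t) (ε t)) ⬝ᵥ Ξ *ᵥ (Sum.elim (e t) (ε t)) := by
    intro t
    rw [(hV t).deriv]
    have s2 : ((H₂ * C) *ᵥ e t) ⬝ᵥ (-(ωb • sgn ((H₂ * C) *ᵥ e t)) - ω t) ≤ 0 := by
      have hrw : -(ωb • sgn ((H₂ * C) *ᵥ e t)) - ω t
          = (-ω t) - ωb • sgn ((H₂ * C) *ᵥ e t) := by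
        funext i
        simp only [Pi.sub_apply, Pi.neg_apply, Pi.smul_apply, smul_eq_mul]
        ring
      rw [hrw]
      exact slack_le _ _ ωb ωb le_rfl (fun i => by simpa using hω t i)
    have s1 : ((H₁ * C) *ᵥ e t) ⬝ᵥ (d t - ρ • sgn ((H₁ * C) *ᵥ e t)) ≤ 0 :=
      slack_le _ _ ρ c (by rw [hρ]; linarith) (hd t)
    have s3 : (H₃ *ᵥ ε t) ⬝ᵥ (ω t - ωb • sgn (H₃ *ᵥ ε t)) ≤ 0 :=
      slack_le _ _ ωb ωb le_rfl (hω t)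
    rw [he1 t, he2 t, hquad t]
    nlinarith [s1, s2, s3]
  have hXile : ∀ t, (Sum.elim (e t) (ε t)) ⬝ᵥ Ξ *ᵥ (Sum.elim (e t) (ε t)) ≤ 0 := by
    intro t
    by_cases h : Sum.elim (e t) (ε t) = 0
    · simp [h]
    · exact (hNegDef _ h).le
  refine ⟨hDiff, fun t => (hbound t).trans (hXile t), fun t ht => ?_⟩
  have hne : Sum.elim (e t) (ε t) ≠ 0 := by
    intro hcontra
    apply ht
    have h1 : e t = 0 := funext fun i => congrFun hcontra (Sum.inl i)
    have h2 : ε t = 0 := funext fun i => congrFun hcontra (Sum.inr i)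
    rw [h1, h2]
  exact lt_of_le_of_lt (hbound t) (hNegDef _ hne)
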